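/- Let k ∈ ℝ, ε₁ ≥ 0, T > 0, let R : ℝ → (ℝⁿ →L[ℝ] ℝⁿ) be continuous with ‖R(t) − k·id‖ ≤ ε₁ for all t ∈ [0, T], and let y : ℝ → ℝⁿ be twice differentiable with y''(t) + R(t) y(t) = 0 on [0, T]. Set V(t) = √(‖y(t)‖²·‖y'(t)‖² − ⟨y(t), y'(t)⟩²). If V(T) = 0 (i.e. y(T) and y'(T) are linearly dependent), then V(0) ≤ ε₁·∫₀ᵀ ‖y(s)‖² ds. -/

import Mathlib

open scoped InnerProductSpace
open Real

/-- If `‖R(t) − k·id‖ ≤ ε₁` on `[0,T]`, `y'' + R(t) y = 0` on `[0,T]`, and the parallelogram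
area `V(T) = 0` (i.e. `y(T)` and `y'(T)` are linearly dependent), then
`V(0) ≤ ε₁·∫₀ᵀ ‖y(s)‖² ds`. -/
theorem stmt_6 {n : ℕ} (k ε₁ T : ℝ) (hε₁ : 0 ≤ ε₁) (hT : 0 < T)
    (R : ℝ → EuclideanSpace ℝ (Fin n) →L[ℝ] EuclideanSpace ℝ (Fin n))
    (hRcont : Continuous R)
    (hR : ∀ t ∈ Set.Icc (0 : ℝ) T,
      ‖R t - k • ContinuousLinearMap.id ℝ (EuclideanSpace ℝ (Fin n))‖ ≤ ε₁)
    (y y' y'' : ℝ → EuclideanSpace ℝ (Fin n))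
    (hy : ∀ t, HasDerivAt y (y' t) t) (hy' : ∀ t, HasDerivAt y' (y'' t) t)
    (hode : ∀ t ∈ Set.Icc (0 : ℝ) T, y'' t + R t (y t) = 0)
    (V : ℝ → ℝ)
    (hV : ∀ t, V t = Real.sqrt (‖y t‖ ^ 2 * ‖y' t‖ ^ 2 - ⟪y t, y' t⟫_ℝ ^ 2))
    (hVT : V T = 0) :
    V 0 ≤ ε₁ * ∫ s in (0:ℝ)..T, ‖y s‖ ^ 2 := by
  set W : ℝ → ℝ := fun t => ⟪y t, y t⟫_ℝ * ⟪y' t, y' t⟫_ℝ - ⟪y t, y' t⟫_ℝ ^ 2 with hWdef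
  set W' : ℝ → ℝ := fun t =>
    2 * ⟪y t, y t⟫_ℝ * ⟪y' t, y'' t⟫_ℝ - 2 * ⟪y t, y' t⟫_ℝ * ⟪y t, y'' t⟫_ℝ with hW'def
  have hVW : ∀ t, V t = Real.sqrt (W t) := by
    intro t
    rw [hV t]
    simp only [hWdef]
    rw [real_inner_self_eq_norm_sq, real_inner_self_eq_norm_sq]
  have hW0 : ∀ t, 0 ≤ W t := by
    intro t
    have h := abs_real_inner_le_norm (y t) (y' t)
    have h2 : ⟪y t, y' t⟫_ℝ ^ 2 ≤ (‖y t‖ * ‖y' t‖) ^ 2 := by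
      rw [← sq_abs]
      exact pow_le_pow_left₀ (abs_nonneg _) h 2
    simp only [hWdef, real_inner_self_eq_norm_sq]
    nlinarith
  have hWT : W T = 0 := by
    have h := (hVW T).symm.trans hVT
    nlinarith [Real.sq_sqrt (hW0 T), hW0 T]
  -- derivative of W
  have hWd : ∀ t, HasDerivAt W (W' t) t := by
    intro t
    have hA := (hy t).inner ℝ (hy t)
    have hB := (hy' t).inner ℝ (hy' t)
    have hC := (hy t).inner ℝ (hy' t)
    have h3 := (hA.mul hB).sub (hC.pow 2)
    refine h3.congr_deriv ?_
    simp only [hW'def]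
    rw [real_inner_comm (y' t) (y t), real_inner_comm (y'' t) (y' t)]
    ring
  have hycont : Continuous y :=
    continuous_iff_continuousAt.mpr fun t => (hy t).continuousAt
  -- derivative of the integral term
  have hGd : ∀ t, HasDerivAt (fun u => ∫ s in (0:ℝ)..u, ‖y s‖ ^ 2) (‖y t‖ ^ 2) t := by
    intro t
    have hc : Continuous fun s => ‖y s‖ ^ 2 := by fun_prop
    exact intervalIntegral.integral_hasDerivAt_right (hc.intervalIntegrable 0 t)
      (hc.stronglyMeasurableAtFilter _ _) hc.continuousAt
  -- key pointwise bound on [0,T]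
  have hkey : ∀ t ∈ Set.Icc (0:ℝ) T, |W' t| ≤ 2 * ε₁ * ‖y t‖ ^ 2 * Real.sqrt (W t) := by
    intro t ht
    set E := R t - k • ContinuousLinearMap.id ℝ (EuclideanSpace ℝ (Fin n)) with hE
    have hy2 : y'' t = -(E (y t)) - k • y t := by
      have h := hode t ht
      have h' : y'' t = -(R t (y t)) := by
        have := eq_neg_of_add_eq_zero_left h
        exact this
      rw [h']
      simp [hE]
    set z : EuclideanSpace ℝ (Fin n) := ⟪y t, y t⟫_ℝ • y' t - ⟪y t, y' t⟫_ℝ • y t with hz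
    have hWz : W' t = -2 * ⟪z, E (y t)⟫_ℝ := by
      simp only [hW'def, hy2, inner_sub_right, inner_neg_right, real_inner_smul_right,
        hz, inner_sub_left, real_inner_smul_left]
      rw [real_inner_comm (y' t) (y t)]
      ring
    have hz2 : ‖z‖ ^ 2 = ⟪y t, y t⟫_ℝ * W t := by
      rw [← real_inner_self_eq_norm_sq]
      simp only [hz, inner_sub_left, inner_sub_right, real_inner_smul_left,
        real_inner_smul_right, hWdef]
      rw [real_inner_comm (y' t) (y t)]
      ring
    have hzn : ‖z‖ = ‖y t‖ * Real.sqrt (W t) := by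
      have h1 : ‖z‖ = Real.sqrt (‖z‖ ^ 2) := (Real.sqrt_sq (norm_nonneg z)).symm
      rw [h1, hz2, real_inner_self_eq_norm_sq,
        Real.sqrt_mul (by positivity), Real.sqrt_sq (norm_nonneg _)]
    have hEy : ‖E (y t)‖ ≤ ε₁ * ‖y t‖ := by
      calc ‖E (y t)‖ ≤ ‖E‖ * ‖y t‖ := E.le_opNorm (y t)
      _ ≤ ε₁ * ‖y t‖ := by
        have := hR t ht
        exact mul_le_mul_of_nonneg_right this (norm_nonneg _)
    have h1 : |⟪z, E (y t)⟫_ℝ| ≤ (‖y t‖ * Real.sqrt (W t)) * (ε₁ * ‖y t‖) := by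
      calc |⟪z, E (y t)⟫_ℝ| ≤ ‖z‖ * ‖E (y t)‖ := abs_real_inner_le_norm _ _
      _ ≤ (‖y t‖ * Real.sqrt (W t)) * (ε₁ * ‖y t‖) := by
        rw [hzn]
        exact mul_le_mul_of_nonneg_left hEy (by positivity)
    rw [hWz]
    rw [abs_mul]
    have : |(-2 : ℝ)| = 2 := by norm_num
    rw [this]
    nlinarith [h1]
  -- main argument: for every ε > 0, V 0 ≤ ε₁ * ∫ + ε
  apply le_of_forall_pos_le_add
  intro ε hε
  set F : ℝ → ℝ := fun t => Real.sqrt (W t + ε ^ 2) with hF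
  set H : ℝ → ℝ := fun t => F t + ε₁ * ∫ s in (0:ℝ)..t, ‖y s‖ ^ 2 with hH
  have hpos : ∀ t, 0 < W t + ε ^ 2 := fun t => by nlinarith [hW0 t]
  have hFd : ∀ t, HasDerivAt F (W' t / (2 * Real.sqrt (W t + ε ^ 2))) t := by
    intro t
    have h1 := (Real.hasDerivAt_sqrt (ne_of_gt (hpos t))).comp t ((hWd t).add_const (ε ^ 2))
    refine h1.congr_deriv ?_
    field_simp
  have hHd : ∀ t, HasDerivAt H (W' t / (2 * Real.sqrt (W t + ε ^ 2)) + ε₁ * ‖y t‖ ^ 2) t :=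
    fun t => (hFd t).add ((hGd t).const_mul ε₁)
  have hmono : MonotoneOn H (Set.Icc 0 T) := by
    apply monotoneOn_of_deriv_nonneg (convex_Icc 0 T)
    · exact (continuous_iff_continuousAt.mpr fun t => (hHd t).continuousAt).continuousOn
    · exact fun x _ => ((hHd x).differentiableAt).differentiableWithinAt
    · intro x hx
      rw [interior_Icc] at hx
      rw [(hHd x).deriv]
      have hk := hkey x ⟨hx.1.le, hx.2.le⟩
      have hs : (0:ℝ) < Real.sqrt (W x + ε ^ 2) := Real.sqrt_pos.mpr (hpos x)
      have hle : Real.sqrt (W x) ≤ Real.sqrt (W x + ε ^ 2) :=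
        Real.sqrt_le_sqrt (by nlinarith)
      have hlb : -(ε₁ * ‖y x‖ ^ 2) ≤ W' x / (2 * Real.sqrt (W x + ε ^ 2)) := by
        rw [le_div_iff₀ (by positivity)]
        have h1 := (abs_le.mp hk).1
        have h2 : ε₁ * ‖y x‖ ^ 2 * Real.sqrt (W x) ≤ ε₁ * ‖y x‖ ^ 2 * Real.sqrt (W x + ε ^ 2) :=
          mul_le_mul_of_nonneg_left hle (by positivity)
        linarith
      linarith
  have h01 : H 0 ≤ H T :=
    hmono ⟨le_refl 0, hT.le⟩ ⟨hT.le, le_refl T⟩ hT.le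
  have hH0 : H 0 = Real.sqrt (W 0 + ε ^ 2) := by
    simp [hH, hF]
  have hHT : H T = ε + ε₁ * ∫ s in (0:ℝ)..T, ‖y s‖ ^ 2 := by
    simp [hH, hF, hWT, Real.sqrt_sq hε.le]
  have hV0 : V 0 ≤ Real.sqrt (W 0 + ε ^ 2) := by
    rw [hVW 0]
    exact Real.sqrt_le_sqrt (by nlinarith)
  calc V 0 ≤ H 0 := by rw [hH0]; exact hV0
  _ ≤ H T := h01
  _ = ε₁ * (∫ s in (0:ℝ)..T, ‖y s‖ ^ 2) + ε := by rw [hHT]; ring
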